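/- (DRO representation for Group-Lasso logistic regression.) Let (X_1,Y_1),…,(X_n,Y_n) ∈ ℝ^d × {−1, 1}, let P_n be their empirical measure, let q, t ∈ [1,∞] with conjugates p, s (1/p + 1/q = 1, 1/s + 1/t = 1), let α ∈ ℝ^d̄ have strictly positive entries, and let c be the cost function c((x,y),(x',y')) = ‖x − x'‖_{α⁻¹-(q,t)} if y = y' and +∞ otherwise. Then for every δ > 0, min over β ∈ ℝ^d of sup { E_P[log(1 + exp(−Y·βᵀX))] : P a probability measure on ℝ^{d+1} with D_c(P, P_n) ≤ δ } equals min over β ∈ ℝ^d of E_{P_n}[log(1 + exp(−Y·βᵀX))] + δ·‖β‖_{α-(p,s)}. -/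

import Mathlib

open scoped ENNReal BigOperators
open MeasureTheory Filter

/-- The l_p norm (p ∈ [1,∞], with sup modification at p = ∞) of a finite real vector. -/
noncomputable def lpn (p : ℝ≥0∞) {ι : Type} [Fintype ι] (x : ι → ℝ) : ℝ :=
  ‖(WithLp.equiv p (ι → ℝ)).symm x‖

/-- The α-(p,s) groupwise norm: ‖x‖ = ( Σ_i α_i^s ‖x(G_i)‖_p^s )^{1/s}. -/
noncomputable def gnorm {d dbar : ℕ} (G : Fin dbar → Finset (Fin d)) (α : Fin dbar → ℝ)
    (p s : ℝ≥0∞) (x : Fin d → ℝ) : ℝ :=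
  lpn s (fun i => α i * lpn p (fun j : {k // k ∈ G i} => x j.1))

/-- G_1, …, G_d̄ form a partition of {1,…,d} into nonempty disjoint groups. -/
def IsPartition {d dbar : ℕ} (G : Fin dbar → Finset (Fin d)) : Prop :=
  (∀ i, (G i).Nonempty) ∧ (∀ i j, i ≠ j → Disjoint (G i) (G j)) ∧ (∀ k, ∃ i, k ∈ G i)

/-- Optimal transport discrepancy with cost `c`: the Kantorovich infimum over couplings of
`P` and `Q`. -/
noncomputable def Dc {E : Type} [MeasurableSpace E] (c : E → E → ℝ≥0∞)
    (P Q : Measure E) : ℝ≥0∞ :=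
  ⨅ (π : Measure (E × E)) (_ : π.map Prod.fst = P) (_ : π.map Prod.snd = Q),
    ∫⁻ z, c z.1 z.2 ∂π

section lpn
variable {ι : Type} [Fintype ι] {p q : ℝ≥0∞}

lemma lpn_eq_sum (hp : p ≠ 0) (hp' : p ≠ ∞) (x : ι → ℝ) :
    lpn p x = (∑ i, |x i| ^ p.toReal) ^ (1 / p.toReal) := by
  rw [lpn, PiLp.norm_eq_sum (ENNReal.toReal_pos hp hp')]
  simp [WithLp.equiv_symm_apply, PiLp.toLp_apply, Real.norm_eq_abs]

lemma lpn_eq_sup (x : ι → ℝ) : lpn ∞ x = ⨆ i, |x i| := by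
  rw [lpn, PiLp.norm_eq_ciSup]
  simp [WithLp.equiv_symm_apply, PiLp.toLp_apply, Real.norm_eq_abs]

lemma lpn_nonneg (hp : 1 ≤ p) (x : ι → ℝ) : 0 ≤ lpn p x := by
  haveI : Fact (1 ≤ p) := ⟨hp⟩
  exact norm_nonneg _

lemma lpn_smul (hp : 1 ≤ p) (c : ℝ) (x : ι → ℝ) :
    lpn p (fun i => c * x i) = |c| * lpn p x := by
  haveI : Fact (1 ≤ p) := ⟨hp⟩
  have h : (WithLp.equiv p (ι → ℝ)).symm (fun i => c * x i)
      = c • (WithLp.equiv p (ι → ℝ)).symm x := rfl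
  rw [lpn, h, norm_smul, Real.norm_eq_abs, lpn]

lemma lpn_zero (hp : 1 ≤ p) : lpn p (fun _ : ι => (0:ℝ)) = 0 := by
  have := lpn_smul hp 0 (fun _ : ι => (0:ℝ))
  simpa using this

lemma lpn_eq_zero (hp : 1 ≤ p) {x : ι → ℝ} (h : lpn p x = 0) : x = 0 := by
  haveI : Fact (1 ≤ p) := ⟨hp⟩
  have h2 : (WithLp.equiv p (ι → ℝ)).symm x = 0 := norm_eq_zero.mp h
  funext i
  have := congrArg (fun z : PiLp p (fun _ : ι => ℝ) => z i) h2
  simpa using this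

lemma lpn_mono (hp : 1 ≤ p) {x y : ι → ℝ} (h : ∀ i, |x i| ≤ y i) :
    lpn p x ≤ lpn p y := by
  rcases eq_or_ne p ∞ with rfl | hp'
  · rw [lpn_eq_sup, lpn_eq_sup]
    cases isEmpty_or_nonempty ι
    · simp [Real.iSup_of_isEmpty]
    · exact ciSup_le fun i => (h i).trans ((le_abs_self _).trans
        (le_ciSup (f := fun j => |y j|) (Set.Finite.bddAbove (Set.finite_range _)) i))
  · have h0 : p ≠ 0 := by rintro rfl; simp at hp
    rw [lpn_eq_sum h0 hp', lpn_eq_sum h0 hp']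
    apply Real.rpow_le_rpow (by positivity)
    · apply Finset.sum_le_sum
      intro i _
      exact Real.rpow_le_rpow (abs_nonneg _) ((h i).trans (le_abs_self _))
        (ENNReal.toReal_nonneg)
    · positivity

end lpn

section holder
variable {ι : Type} [Fintype ι] {p q : ℝ≥0∞}

structure ENNReal.IsConjExponent (p q : ℝ≥0∞) : Prop where
  inv_add_inv_conj : p⁻¹ + q⁻¹ = 1

lemma ENNReal.IsConjExponent.symm (h : ENNReal.IsConjExponent p q) : ENNReal.IsConjExponent q p :=
  ⟨by rw [add_comm]; exact h.inv_add_inv_conj⟩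

lemma ENNReal.IsConjExponent.one_le (h : ENNReal.IsConjExponent p q) : 1 ≤ p := by
  haveI : ENNReal.HolderConjugate p q := ENNReal.holderConjugate_iff.mpr h.inv_add_inv_conj
  exact ENNReal.HolderConjugate.one_le p q

lemma ENNReal.IsConjExponent.ne_zero (h : ENNReal.IsConjExponent p q) : p ≠ 0 := by
  haveI : ENNReal.HolderConjugate p q := ENNReal.holderConjugate_iff.mpr h.inv_add_inv_conj
  exact ENNReal.HolderConjugate.ne_zero p q

lemma lpn_one (x : ι → ℝ) : lpn 1 x = ∑ i, |x i| := by
  rw [lpn_eq_sum one_ne_zero ENNReal.one_ne_top]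
  simp

lemma abs_le_lpn_top (x : ι → ℝ) (i : ι) : |x i| ≤ lpn ∞ x := by
  rw [lpn_eq_sup]
  exact le_ciSup (f := fun j => |x j|) (Set.Finite.bddAbove (Set.finite_range _)) i

lemma lpn_holder_one_top (b c : ι → ℝ) : ∑ i, b i * c i ≤ lpn 1 b * lpn ∞ c := by
  rw [lpn_one, Finset.sum_mul]
  apply Finset.sum_le_sum
  intro i _
  calc b i * c i ≤ |b i * c i| := le_abs_self _
    _ = |b i| * |c i| := abs_mul _ _
    _ ≤ |b i| * lpn ∞ c := mul_le_mul_of_nonneg_left (abs_le_lpn_top c i) (abs_nonneg _)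

lemma isConj_q_of_p_one (h : ENNReal.IsConjExponent p q) (hp : p = 1) : q = ∞ := by
  subst hp
  have := h.inv_add_inv_conj
  simp only [inv_one] at this
  have : q⁻¹ = 0 := by
    have h1 : (1:ℝ≥0∞) + q⁻¹ = 1 + 0 := by simpa using this
    exact (ENNReal.add_right_inj (by simp)).mp h1
  simpa using this

lemma isConj_toReal (h : ENNReal.IsConjExponent p q) (hp : p ≠ ∞) (hq : q ≠ ∞) :
    Real.HolderConjugate p.toReal q.toReal := by
  have hp0 : p ≠ 0 := h.ne_zero
  have hq0 : q ≠ 0 := h.symm.ne_zero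
  have hp1 : p ≠ 1 := by
    rintro rfl
    exact hq (isConj_q_of_p_one h rfl)
  rw [Real.holderConjugate_iff]
  constructor
  · rw [← ENNReal.toReal_one]
    exact (ENNReal.toReal_lt_toReal (by simp) hp).mpr (lt_of_le_of_ne h.one_le (Ne.symm hp1))
  · rw [← ENNReal.toReal_inv, ← ENNReal.toReal_inv, ← ENNReal.toReal_add, h.inv_add_inv_conj,
      ENNReal.toReal_one]
    · simp [hp0]
    · simp [hq0]

lemma lpn_holder (h : ENNReal.IsConjExponent p q) (b c : ι → ℝ) :
    ∑ i, b i * c i ≤ lpn p b * lpn q c := by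
  rcases eq_or_ne p ∞ with rfl | hp
  · have hq1 : q = 1 := by
      have := h.inv_add_inv_conj
      simp only [ENNReal.inv_top, zero_add] at this
      simpa using congrArg (·⁻¹) this
    subst hq1
    calc ∑ i, b i * c i = ∑ i, c i * b i := by simp [mul_comm]
      _ ≤ lpn 1 c * lpn ∞ b := lpn_holder_one_top c b
      _ = lpn ∞ b * lpn 1 c := mul_comm _ _
  rcases eq_or_ne q ∞ with rfl | hq
  · have hp1 : p = 1 := by
      have := h.inv_add_inv_conj
      simp only [ENNReal.inv_top, add_zero] at this
      simpa using congrArg (·⁻¹) this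
    subst hp1
    exact lpn_holder_one_top b c
  · have hc := isConj_toReal h hp hq
    rw [lpn_eq_sum h.ne_zero hp, lpn_eq_sum h.symm.ne_zero hq]
    exact Real.inner_le_Lp_mul_Lq Finset.univ b c hc

end holder

section attain
variable {ι : Type} [Fintype ι] {p q : ℝ≥0∞}

lemma lpn_attain (h : ENNReal.IsConjExponent p q) (b : ι → ℝ) :
    ∃ u : ι → ℝ, lpn q u ≤ 1 ∧ ∑ i, b i * u i = lpn p b ∧
      ((∀ i, 0 ≤ b i) → ∀ i, 0 ≤ u i) := by
  classical
  cases isEmpty_or_nonempty ι with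
  | inl hemp =>
    refine ⟨fun _ => 0, ?_, ?_, fun _ i => le_rfl⟩
    · rw [show (fun _ : ι => (0:ℝ)) = (fun i : ι => (0:ℝ) * 0) by funext; ring,
        lpn_smul h.symm.one_le]
      simp
    · have hb : b = fun _ : ι => (0:ℝ) := funext fun i => absurd (IsEmpty.false i) (by simp)
      rw [Finset.univ_eq_empty, Finset.sum_empty, hb, lpn_zero h.one_le]
  | inr hne =>
  rcases eq_or_ne p ∞ with rfl | hp
  · -- q = 1, pick max coordinate
    have hq1 : q = 1 := by
      have := h.inv_add_inv_conj
      simp only [ENNReal.inv_top, zero_add] at this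
      simpa using congrArg (·⁻¹) this
    subst hq1
    obtain ⟨i0, hi0⟩ := Finset.exists_max_image Finset.univ (fun i => |b i|) ⟨Classical.arbitrary ι, Finset.mem_univ _⟩
    refine ⟨fun i => if i = i0 then (if 0 ≤ b i0 then 1 else -1) else 0, ?_, ?_, ?_⟩
    · rw [lpn_one]
      rw [Finset.sum_eq_single i0]
      · rw [if_pos rfl]; split <;> norm_num
      · intro i _ hi; simp [hi]
      · simp
    · rw [Finset.sum_eq_single i0]
      · have : b i0 * (if i0 = i0 then (if 0 ≤ b i0 then (1:ℝ) else -1) else 0) = |b i0| := by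
          rw [if_pos rfl]
          split_ifs with hbi
          · rw [mul_one, abs_of_nonneg hbi]
          · rw [abs_of_neg (lt_of_not_ge hbi)]; ring
        rw [this, lpn_eq_sup]
        apply le_antisymm
        · exact le_ciSup (f := fun j => |b j|) (Set.Finite.bddAbove (Set.finite_range _)) i0
        · exact ciSup_le fun i => hi0.2 i (Finset.mem_univ i)
      · intro i _ hi; simp [hi]
      · simp
    · intro hb i
      dsimp only
      split_ifs with h1 h2
      · norm_num
      · exact absurd (hb i0) h2
      · exact le_rfl
  rcases eq_or_ne q ∞ with rfl | hq
  · -- p = 1, u = sign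
    have hp1 : p = 1 := by
      have := h.inv_add_inv_conj
      simp only [ENNReal.inv_top, add_zero] at this
      simpa using congrArg (·⁻¹) this
    subst hp1
    refine ⟨fun i => if 0 ≤ b i then 1 else -1, ?_, ?_, ?_⟩
    · rw [lpn_eq_sup]
      apply ciSup_le
      intro i
      split <;> norm_num
    · rw [lpn_one]
      apply Finset.sum_congr rfl
      intro i _
      dsimp only
      split_ifs with hbi
      · rw [mul_one, abs_of_nonneg hbi]
      · rw [abs_of_neg (lt_of_not_ge hbi)]; ring
    · intro hb i
      dsimp only
      rw [if_pos (hb i)]; norm_num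
  · -- interior case
    have hc := isConj_toReal h hp hq
    set p' := p.toReal with hp'def
    set q' := q.toReal with hq'def
    have hp'1 : 1 < p' := hc.lt
    have hp'0 : 0 < p' := hc.pos
    have hq'0 : 0 < q' := hc.symm.pos
    by_cases hb0 : ∀ i, b i = 0
    · refine ⟨fun _ => 0, ?_, ?_, fun _ i => le_rfl⟩
      · rw [show (fun _ : ι => (0:ℝ)) = (fun i : ι => (0:ℝ) * 0) by funext; ring,
          lpn_smul h.symm.one_le]
        simp
      · have : b = (fun _ : ι => (0:ℝ)) := funext hb0
        rw [this, lpn_zero h.one_le]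
        simp
    · push_neg at hb0
      obtain ⟨i1, hi1⟩ := hb0
      set S := ∑ i, |b i| ^ p' with hSdef
      have hSpos : 0 < S := by
        apply Finset.sum_pos' (fun i _ => Real.rpow_nonneg (abs_nonneg _) _)
        exact ⟨i1, Finset.mem_univ _, Real.rpow_pos_of_pos (abs_pos.mpr hi1) _⟩
      set B := lpn p b with hBdef
      have hBeq : B = S ^ (1 / p') := by rw [hBdef, lpn_eq_sum h.ne_zero hp]
      have hBpos : 0 < B := by rw [hBeq]; positivity
      have hBp : B ^ p' = S := by
        rw [hBeq, ← Real.rpow_mul hSpos.le, one_div, inv_mul_cancel₀ hp'0.ne', Real.rpow_one]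
      have hBp1pos : 0 < B ^ (p' - 1) := Real.rpow_pos_of_pos hBpos _
      refine ⟨fun i => (if 0 ≤ b i then 1 else -1) * |b i| ^ (p' - 1) / B ^ (p' - 1),
        ?_, ?_, ?_⟩
      · have habs : ∀ i, |(if 0 ≤ b i then (1:ℝ) else -1) * |b i| ^ (p' - 1) / B ^ (p' - 1)|
            = |b i| ^ (p' - 1) / B ^ (p' - 1) := by
          intro i
          rw [abs_div, abs_mul]
          have h1 : |if 0 ≤ b i then (1:ℝ) else -1| = 1 := by split <;> norm_num
          rw [h1, one_mul, abs_of_nonneg (Real.rpow_nonneg (abs_nonneg _) _),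
            abs_of_nonneg hBp1pos.le]
        rw [lpn_eq_sum h.symm.ne_zero hq]
        have hterm : ∀ i, |(if 0 ≤ b i then (1:ℝ) else -1) * |b i| ^ (p' - 1) / B ^ (p' - 1)| ^ q'
            = |b i| ^ p' / B ^ p' := by
          intro i
          rw [habs i, Real.div_rpow (Real.rpow_nonneg (abs_nonneg _) _) hBp1pos.le,
            ← Real.rpow_mul (abs_nonneg _), ← Real.rpow_mul hBpos.le,
            hc.sub_one_mul_conj]
        rw [Finset.sum_congr rfl (fun i _ => hterm i), ← Finset.sum_div, ← hSdef, hBp,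
          div_self hSpos.ne']
        rw [Real.one_rpow]
      · have hterm : ∀ i, b i * ((if 0 ≤ b i then (1:ℝ) else -1) * |b i| ^ (p' - 1) / B ^ (p' - 1))
            = |b i| ^ p' / B ^ (p' - 1) := by
          intro i
          have h1 : b i * (if 0 ≤ b i then (1:ℝ) else -1) = |b i| := by
            split_ifs with hbi
            · rw [mul_one, abs_of_nonneg hbi]
            · rw [abs_of_neg (lt_of_not_ge hbi)]; ring
          rw [mul_div_assoc', ← mul_assoc, h1]
          congr 1
          by_cases hbi : b i = 0
          · rw [hbi]
            simp only [abs_zero]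
            rw [Real.zero_rpow (by linarith), Real.zero_rpow hp'0.ne', mul_zero]
          · have habspos : 0 < |b i| := abs_pos.mpr hbi
            nth_rewrite 1 [← Real.rpow_one |b i|]
            rw [← Real.rpow_add habspos]
            ring_nf
        rw [Finset.sum_congr rfl (fun i _ => hterm i), ← Finset.sum_div, ← hSdef, ← hBp]
        rw [div_eq_iff hBp1pos.ne']
        have hBB : B * B ^ (p' - 1) = B ^ p' := by
          nth_rewrite 1 [← Real.rpow_one B]
          rw [← Real.rpow_add hBpos]
          ring_nf
        rw [hBB]
      · intro hb i
        dsimp only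
        rw [if_pos (hb i)]
        positivity

section gnorm
variable {d dbar : ℕ} {G : Fin dbar → Finset (Fin d)} {α : Fin dbar → ℝ} {p q s t : ℝ≥0∞}

lemma partition_sum (hG : IsPartition G) (f : Fin d → ℝ) :
    ∑ k, f k = ∑ i, ∑ j : {k // k ∈ G i}, f j.1 := by
  classical
  have hcov : Finset.univ.biUnion G = Finset.univ := by
    ext k; simp only [Finset.mem_biUnion, Finset.mem_univ, true_and, iff_true]
    exact hG.2.2 k
  rw [← hcov, Finset.sum_biUnion (fun a _ b _ hab => hG.2.1 a b hab)]
  exact Finset.sum_congr rfl (fun i _ => (Finset.sum_coe_sort (G i) f).symm)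

lemma gnorm_nonneg (hs : 1 ≤ s) (x : Fin d → ℝ) : 0 ≤ gnorm G α p s x :=
  lpn_nonneg hs _

lemma gnorm_zero (hp : 1 ≤ p) (hs : 1 ≤ s) :
    gnorm G α p s (0 : Fin d → ℝ) = 0 := by
  have h1 : ∀ i, lpn p (fun j : {k // k ∈ G i} => (0 : Fin d → ℝ) j.1) = 0 := by
    intro i
    have : (fun j : {k // k ∈ G i} => (0 : Fin d → ℝ) j.1) = (fun _ => (0:ℝ)) := rfl
    rw [this, lpn_zero hp]
  rw [gnorm]
  have : (fun i => α i * lpn p (fun j : {k // k ∈ G i} => (0 : Fin d → ℝ) j.1))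
      = fun _ => (0:ℝ) := by
    funext i; rw [h1 i, mul_zero]
  rw [this, lpn_zero hs]

lemma gnorm_smul (hp : 1 ≤ p) (hs : 1 ≤ s) (hα : ∀ i, 0 ≤ α i) (c : ℝ) (x : Fin d → ℝ) :
    gnorm G α p s (fun k => c * x k) = |c| * gnorm G α p s x := by
  rw [gnorm, gnorm]
  have h1 : (fun i => α i * lpn p (fun j : {k // k ∈ G i} => (fun k => c * x k) j.1))
      = fun i => |c| * (α i * lpn p (fun j : {k // k ∈ G i} => x j.1)) := by
    funext i
    rw [lpn_smul hp c (fun j : {k // k ∈ G i} => x j.1)]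
    ring
  rw [h1, lpn_smul hs, abs_abs]

lemma gnorm_eq_zero (hp : 1 ≤ p) (hs : 1 ≤ s) (hG : IsPartition G) (hα : ∀ i, 0 < α i)
    {x : Fin d → ℝ} (h : gnorm G α p s x = 0) : x = 0 := by
  have h1 := lpn_eq_zero hs h
  funext k
  obtain ⟨i, hik⟩ := hG.2.2 k
  have h2 : α i * lpn p (fun j : {k // k ∈ G i} => x j.1) = 0 := congrFun h1 i
  have h3 : lpn p (fun j : {k // k ∈ G i} => x j.1) = 0 := by
    rcases mul_eq_zero.mp h2 with h' | h'
    · exact absurd h' (hα i).ne'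
    · exact h'
  have h4 := lpn_eq_zero hp h3
  exact congrFun h4 ⟨k, hik⟩

lemma gnorm_holder (hPQ : ENNReal.IsConjExponent p q) (hST : ENNReal.IsConjExponent s t)
    (hG : IsPartition G) (hα : ∀ i, 0 < α i) (β x : Fin d → ℝ) :
    ∑ k, β k * x k ≤ gnorm G α p s β * gnorm G (fun i => (α i)⁻¹) q t x := by
  rw [partition_sum hG]
  calc ∑ i, ∑ j : {k // k ∈ G i}, β j.1 * x j.1
      ≤ ∑ i, (α i * lpn p (fun j : {k // k ∈ G i} => β j.1)) *
          ((α i)⁻¹ * lpn q (fun j : {k // k ∈ G i} => x j.1)) := by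
        apply Finset.sum_le_sum
        intro i _
        have hh := lpn_holder hPQ (fun j : {k // k ∈ G i} => β j.1)
          (fun j : {k // k ∈ G i} => x j.1)
        calc ∑ j : {k // k ∈ G i}, β j.1 * x j.1
            ≤ lpn p (fun j : {k // k ∈ G i} => β j.1) *
              lpn q (fun j : {k // k ∈ G i} => x j.1) := hh
          _ = (α i * lpn p (fun j : {k // k ∈ G i} => β j.1)) *
              ((α i)⁻¹ * lpn q (fun j : {k // k ∈ G i} => x j.1)) := by
              rw [mul_mul_mul_comm, mul_inv_cancel₀ (hα i).ne', one_mul]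
    _ ≤ gnorm G α p s β * gnorm G (fun i => (α i)⁻¹) q t x :=
        lpn_holder hST _ _

lemma gnorm_attain (hPQ : ENNReal.IsConjExponent p q) (hST : ENNReal.IsConjExponent s t)
    (hG : IsPartition G) (hα : ∀ i, 0 < α i) (β : Fin d → ℝ) :
    ∃ v : Fin d → ℝ, gnorm G (fun i => (α i)⁻¹) q t v ≤ 1 ∧
      ∑ k, β k * v k = gnorm G α p s β := by
  classical
  set b : Fin dbar → ℝ := fun i => α i * lpn p (fun j : {k // k ∈ G i} => β j.1) with hbdef
  have hb0 : ∀ i, 0 ≤ b i := fun i => mul_nonneg (hα i).le (lpn_nonneg hPQ.one_le _)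
  obtain ⟨u, hu1, hu2, hu3⟩ := lpn_attain hST b
  have hu0 : ∀ i, 0 ≤ u i := hu3 hb0
  have hw : ∀ i, ∃ w : {k // k ∈ G i} → ℝ, lpn q w ≤ 1 ∧
      (∑ j : {k // k ∈ G i}, β j.1 * w j) = lpn p (fun j : {k // k ∈ G i} => β j.1) :=
    fun i => (lpn_attain hPQ _).imp fun w hw => ⟨hw.1, hw.2.1⟩
  choose w hw1 hw2 using hw
  have hsel : ∀ k : Fin d, ∃ i, k ∈ G i := hG.2.2
  choose idx hidx using hsel
  set v : Fin d → ℝ := fun k => α (idx k) * u (idx k) * w (idx k) ⟨k, hidx k⟩ with hvdef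
  have hvi : ∀ (i : Fin dbar) (k : Fin d) (hk : k ∈ G i), v k = α i * u i * w i ⟨k, hk⟩ := by
    intro i k hk
    have hieq : idx k = i := by
      by_contra hne
      exact Finset.disjoint_left.mp (hG.2.1 _ _ hne) (hidx k) hk
    subst hieq
    rfl
  have hfe : ∀ i, (fun j : {k // k ∈ G i} => v j.1) = fun j : {k // k ∈ G i} => α i * u i * w i j :=
    fun i => funext fun j => hvi i j.1 j.2
  refine ⟨v, ?_, ?_⟩
  · rw [gnorm]
    refine le_trans (lpn_mono hST.symm.one_le (y := u) ?_) hu1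
    intro i
    rw [hfe i, lpn_smul hPQ.symm.one_le (α i * u i) (fun j => w i j)]
    have hnn : 0 ≤ α i * u i := mul_nonneg (hα i).le (hu0 i)
    have hLw : 0 ≤ lpn q (w i) := lpn_nonneg hPQ.symm.one_le _
    have heq : (α i)⁻¹ * (|α i * u i| * lpn q fun j => w i j) = u i * lpn q (w i) := by
      rw [abs_of_nonneg hnn]
      have hne : α i ≠ 0 := (hα i).ne'
      field_simp
    rw [heq, abs_of_nonneg (mul_nonneg (hu0 i) hLw)]
    calc u i * lpn q (w i) ≤ u i * 1 := mul_le_mul_of_nonneg_left (hw1 i) (hu0 i)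
      _ = u i := mul_one _
  · rw [partition_sum hG (fun k => β k * v k)]
    have hterm : ∀ i, (∑ j : {k // k ∈ G i}, β j.1 * v j.1) = b i * u i := by
      intro i
      have : ∀ j : {k // k ∈ G i}, β j.1 * v j.1 = α i * u i * (β j.1 * w i j) := by
        intro j
        rw [hvi i j.1 j.2]
        ring
      rw [Finset.sum_congr rfl (fun j _ => this j), ← Finset.mul_sum, hw2 i, hbdef]
      ring
    rw [Finset.sum_congr rfl (fun i _ => hterm i), hu2, gnorm]

section analytic

lemma logexp_nonneg (u : ℝ) : 0 ≤ Real.log (1 + Real.exp u) :=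
  Real.log_nonneg (by linarith [Real.exp_pos u])

lemma le_logexp (u : ℝ) : u ≤ Real.log (1 + Real.exp u) := by
  calc u = Real.log (Real.exp u) := (Real.log_exp u).symm
    _ ≤ Real.log (1 + Real.exp u) :=
      Real.log_le_log (Real.exp_pos u) (by linarith)

lemma logexp_lipschitz (a b : ℝ) :
    Real.log (1 + Real.exp a) ≤ Real.log (1 + Real.exp b) + |a - b| := by
  rcases le_total a b with hab | hab
  · have h1 : Real.log (1 + Real.exp a) ≤ Real.log (1 + Real.exp b) :=
      Real.log_le_log (by linarith [Real.exp_pos a]) (by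
        have := Real.exp_le_exp.mpr hab; linarith)
    linarith [abs_nonneg (a - b)]
  · have h1 : 1 + Real.exp a ≤ Real.exp (a - b) * (1 + Real.exp b) := by
      rw [mul_add, mul_one, ← Real.exp_add]
      have h2 : a - b + b = a := by ring
      rw [h2]
      have h3 : (1:ℝ) ≤ Real.exp (a - b) := Real.one_le_exp (by linarith)
      linarith
    have h4 : Real.log (1 + Real.exp a) ≤ Real.log (Real.exp (a - b) * (1 + Real.exp b)) :=
      Real.log_le_log (by linarith [Real.exp_pos a]) h1
    rw [Real.log_mul (Real.exp_ne_zero _) (by positivity), Real.log_exp] at h4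
    have h5 : |a - b| = a - b := abs_of_nonneg (by linarith)
    linarith

end analytic

section key
variable {d dbar : ℕ} {n : ℕ}

lemma key (hn : 0 < n)
    (G : Fin dbar → Finset (Fin d)) (hG : IsPartition G)
    (α : Fin dbar → ℝ) (hα : ∀ i, 0 < α i)
    (p q s t : ℝ≥0∞) (hPQ : ENNReal.IsConjExponent p q) (hST : ENNReal.IsConjExponent s t)
    (X : Fin n → Fin d → ℝ) (Y : Fin n → ℝ) (hY : ∀ i, Y i = 1 ∨ Y i = -1)
    (δ : ℝ) (hδ : 0 < δ) (β : Fin d → ℝ) :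
    (⨆ (P : Measure ((Fin d → ℝ) × ℝ)) (_ : IsProbabilityMeasure P)
        (_ : Dc (fun u w => if u.2 = w.2 then
              ENNReal.ofReal (gnorm G (fun i => (α i)⁻¹) q t (u.1 - w.1)) else ⊤)
            P ((n : ℝ≥0∞)⁻¹ • ∑ i : Fin n, Measure.dirac (X i, Y i)) ≤ ENNReal.ofReal δ),
        ∫⁻ z, ENNReal.ofReal (Real.log (1 + Real.exp (- z.2 * ∑ k, β k * z.1 k))) ∂P)
      = (∫⁻ z, ENNReal.ofReal (Real.log (1 + Real.exp (- z.2 * ∑ k, β k * z.1 k)))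
            ∂((n : ℝ≥0∞)⁻¹ • ∑ i : Fin n, Measure.dirac (X i, Y i)))
        + ENNReal.ofReal (δ * gnorm G α p s β) := by
  classical
  set N : (Fin d → ℝ) → ℝ := gnorm G (fun i => (α i)⁻¹) q t with hNdef
  set K : ℝ := gnorm G α p s β with hKdef
  have hK0 : 0 ≤ K := gnorm_nonneg hST.one_le β
  set cost : ((Fin d → ℝ) × ℝ) → ((Fin d → ℝ) × ℝ) → ℝ≥0∞ :=
    fun u w => if u.2 = w.2 then ENNReal.ofReal (N (u.1 - w.1)) else ⊤ with hcostdef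
  set L : ((Fin d → ℝ) × ℝ) → ℝ :=
    fun z => Real.log (1 + Real.exp (- z.2 * ∑ k, β k * z.1 k)) with hLdef
  set ℓ : ((Fin d → ℝ) × ℝ) → ℝ≥0∞ := fun z => ENNReal.ofReal (L z) with hldef
  set Pn : Measure ((Fin d → ℝ) × ℝ) :=
    (n : ℝ≥0∞)⁻¹ • ∑ i : Fin n, Measure.dirac (X i, Y i) with hPndef
  set E : ℝ≥0∞ := ∫⁻ z, ℓ z ∂Pn with hEdef
  -- measurability
  have hm : Measurable ℓ := by
    apply ENNReal.measurable_ofReal.comp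
    apply Real.measurable_log.comp
    apply Measurable.const_add
    apply Real.measurable_exp.comp
    apply Measurable.mul
    · exact measurable_snd.neg
    · exact Finset.measurable_sum _ fun k _ =>
        (measurable_pi_apply k).comp measurable_fst |>.const_mul _
  -- empirical loss value
  have hEeq : E = (n : ℝ≥0∞)⁻¹ * ∑ i : Fin n, ℓ (X i, Y i) := by
    rw [hEdef, hPndef, lintegral_smul_measure, lintegral_finset_sum_measure]
    congr 1
    exact Finset.sum_congr rfl fun i _ => lintegral_dirac' _ hm
  have hEne : E ≠ ⊤ := by
    rw [hEeq]
    exact ENNReal.mul_ne_top (by simp [hn.ne']) (by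
      apply ENNReal.sum_ne_top.mpr
      intro i _
      exact ENNReal.ofReal_ne_top)
  -- pointwise Lipschitz bound
  have hNx : ∀ x : Fin d → ℝ, |∑ k, β k * x k| ≤ K * N x := by
    intro x
    rw [abs_le]
    constructor
    · have h1 := gnorm_holder hPQ hST hG hα β (fun k => (-1) * x k)
      have h2 : ∑ k, β k * ((-1) * x k) = -∑ k, β k * x k := by
        rw [← Finset.sum_neg_distrib]
        exact Finset.sum_congr rfl fun k _ => by ring
      rw [h2, gnorm_smul hPQ.symm.one_le hST.symm.one_le (fun i => (inv_pos.mpr (hα i)).le) (-1) x] at h1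
      simp only [abs_neg, abs_one, one_mul] at h1
      linarith
    · exact gnorm_holder hPQ hST hG hα β x
  have hDiff : ∀ u w : (Fin d → ℝ) × ℝ, (w.2 = 1 ∨ w.2 = -1) →
      ℓ u ≤ ℓ w + ENNReal.ofReal K * cost u w := by
    intro u w hw
    by_cases hyy : u.2 = w.2
    · rw [hcostdef]
      simp only [if_pos hyy]
      have habs : |(- u.2 * ∑ k, β k * u.1 k) - (- w.2 * ∑ k, β k * w.1 k)|
          ≤ K * N (u.1 - w.1) := by
        have hdiff : (- u.2 * ∑ k, β k * u.1 k) - (- w.2 * ∑ k, β k * w.1 k)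
            = - w.2 * ∑ k, β k * (u.1 - w.1) k := by
          rw [hyy]
          have : ∑ k, β k * (u.1 - w.1) k = (∑ k, β k * u.1 k) - ∑ k, β k * w.1 k := by
            rw [← Finset.sum_sub_distrib]
            exact Finset.sum_congr rfl fun k _ => by simp [Pi.sub_apply]; ring
          rw [this]
          ring
        rw [hdiff, abs_mul]
        have hw1 : |(- w.2)| = 1 := by rcases hw with h | h <;> simp [h]
        rw [hw1, one_mul]
        exact hNx _
      have hlip : L u ≤ L w + K * N (u.1 - w.1) := by
        have := logexp_lipschitz (- u.2 * ∑ k, β k * u.1 k) (- w.2 * ∑ k, β k * w.1 k)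
        rw [hLdef]
        dsimp only
        linarith
      calc ℓ u ≤ ENNReal.ofReal (L w + K * N (u.1 - w.1)) := ENNReal.ofReal_le_ofReal hlip
        _ ≤ ENNReal.ofReal (L w) + ENNReal.ofReal (K * N (u.1 - w.1)) :=
            ENNReal.ofReal_add_le
        _ = ℓ w + ENNReal.ofReal K * ENNReal.ofReal (N (u.1 - w.1)) := by
            rw [ENNReal.ofReal_mul hK0]
    · rw [hcostdef]
      simp only [if_neg hyy]
      by_cases hK : K = 0
      · have hβ : β = 0 := gnorm_eq_zero hPQ.one_le hST.one_le hG hα (hKdef ▸ hK)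
        have hL : ∀ z : (Fin d → ℝ) × ℝ, L z = Real.log 2 := by
          intro z
          rw [hLdef]
          dsimp only
          rw [hβ]
          norm_num
        rw [hldef]
        dsimp only
        rw [hL u, hL w]
        exact le_self_add
      · have : ENNReal.ofReal K * ⊤ = ⊤ :=
          ENNReal.mul_top (by simpa [ENNReal.ofReal_eq_zero] using lt_of_le_of_ne hK0 (Ne.symm hK))
        rw [this]
        exact le_top
  -- upper bound
  have hub : ∀ P : Measure ((Fin d → ℝ) × ℝ), IsProbabilityMeasure P →
      Dc cost P Pn ≤ ENNReal.ofReal δ → ∫⁻ z, ℓ z ∂P ≤ E + ENNReal.ofReal (δ * K) := by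
    intro P _ hDc
    refine ENNReal.le_of_forall_pos_le_add fun ε hε _ => ?_
    set εE : ℝ≥0∞ := (ε : ℝ≥0∞) / (ENNReal.ofReal K + 1) with hεEdef
    have hεE0 : εE ≠ 0 := by
      rw [hεEdef]
      simp only [ne_eq, ENNReal.div_eq_zero_iff, not_or]
      exact ⟨by exact_mod_cast hε.ne', by
        exact ENNReal.add_ne_top.mpr ⟨ENNReal.ofReal_ne_top, ENNReal.one_ne_top⟩⟩
    have hlt : Dc cost P Pn < ENNReal.ofReal δ + εE :=
      lt_of_le_of_lt hDc (ENNReal.lt_add_right ENNReal.ofReal_ne_top hεE0)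
    rw [Dc] at hlt
    simp only [iInf_lt_iff] at hlt
    obtain ⟨π, h1, h2, hπ⟩ := hlt
    have hSY : MeasurableSet {w : (Fin d → ℝ) × ℝ | w.2 = 1 ∨ w.2 = -1} := by
      have hseq : {w : (Fin d → ℝ) × ℝ | w.2 = 1 ∨ w.2 = -1}
          = Prod.snd ⁻¹' ({1} ∪ {-1} : Set ℝ) := by
        ext w; simp [Set.mem_union]; tauto
      rw [hseq]
      exact measurable_snd ((measurableSet_singleton 1).union (measurableSet_singleton (-1)))
    have hPn0 : Pn {w : (Fin d → ℝ) × ℝ | w.2 = 1 ∨ w.2 = -1}ᶜ = 0 := by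
      rw [hPndef, Measure.smul_apply, Measure.coe_finset_sum, Finset.sum_apply]
      have hzero : ∀ i : Fin n,
          Measure.dirac ((X i, Y i) : (Fin d → ℝ) × ℝ)
            {w : (Fin d → ℝ) × ℝ | w.2 = 1 ∨ w.2 = -1}ᶜ = 0 := by
        intro i
        rw [Measure.dirac_apply' _ hSY.compl]
        apply Set.indicator_of_notMem
        simp only [Set.mem_compl_iff, Set.mem_setOf_eq, not_not]
        exact hY i
      rw [Finset.sum_congr rfl fun i _ => hzero i]
      simp
    have hae : ∀ᵐ z : ((Fin d → ℝ) × ℝ) × ((Fin d → ℝ) × ℝ) ∂π,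
        z.2.2 = 1 ∨ z.2.2 = -1 := by
      rw [ae_iff]
      have hseteq : {z : ((Fin d → ℝ) × ℝ) × ((Fin d → ℝ) × ℝ) | ¬(z.2.2 = 1 ∨ z.2.2 = -1)}
          = Prod.snd ⁻¹' ({w : (Fin d → ℝ) × ℝ | w.2 = 1 ∨ w.2 = -1}ᶜ) := rfl
      rw [hseteq, ← Measure.map_apply measurable_snd hSY.compl, h2, hPn0]
    calc ∫⁻ z, ℓ z ∂P = ∫⁻ z, ℓ z.1 ∂π := by rw [← h1, lintegral_map hm measurable_fst]
      _ ≤ ∫⁻ z, (ℓ z.2 + ENNReal.ofReal K * cost z.1 z.2) ∂π :=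
          lintegral_mono_ae (hae.mono fun z hz => hDiff z.1 z.2 hz)
      _ = ∫⁻ z, ℓ z.2 ∂π + ∫⁻ z, ENNReal.ofReal K * cost z.1 z.2 ∂π :=
          lintegral_add_left (hm.comp measurable_snd) _
      _ = E + ENNReal.ofReal K * ∫⁻ z, cost z.1 z.2 ∂π := by
          rw [lintegral_const_mul' _ _ ENNReal.ofReal_ne_top]
          have hE2 : ∫⁻ z : ((Fin d → ℝ) × ℝ) × ((Fin d → ℝ) × ℝ), ℓ z.2 ∂π = E := by
            rw [hEdef, ← h2, lintegral_map hm measurable_snd]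
          rw [hE2]
      _ ≤ E + ENNReal.ofReal K * (ENNReal.ofReal δ + εE) := by
          gcongr <;> exact hπ.le
      _ ≤ E + (ENNReal.ofReal (δ * K) + ε) := by
          gcongr
          rw [mul_add]
          have h3 : ENNReal.ofReal K * ENNReal.ofReal δ = ENNReal.ofReal (δ * K) := by
            rw [← ENNReal.ofReal_mul hK0, mul_comm]
          have h4 : ENNReal.ofReal K * εE ≤ (ε : ℝ≥0∞) := by
            rw [hεEdef]
            calc ENNReal.ofReal K * ((ε : ℝ≥0∞) / (ENNReal.ofReal K + 1))
                ≤ (ENNReal.ofReal K + 1) * ((ε : ℝ≥0∞) / (ENNReal.ofReal K + 1)) := by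
                  gcongr
                  exact le_self_add
              _ ≤ ε := ENNReal.mul_div_le
          rw [h3]
          exact add_le_add_right h4 _
      _ = E + ENNReal.ofReal (δ * K) + ε := by rw [add_assoc]
  refine le_antisymm
    (iSup_le fun P => iSup_le fun hP => iSup_le fun hDcP => hub P hP hDcP) ?_
  -- lower bound
  refine ENNReal.le_of_forall_pos_le_add fun ε hε _ => ?_
  set i0 : Fin n := ⟨0, hn⟩ with hi0def
  obtain ⟨v, hv1, hv2⟩ := gnorm_attain hPQ hST hG hα β
  set a0 : ℝ := - Y i0 * ∑ k, β k * X i0 k with ha0def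
  set L0 : ℝ := Real.log (1 + Real.exp a0) with hL0def
  have hL0eq : L (X i0, Y i0) = L0 := rfl
  have hL0a : a0 ≤ L0 := le_logexp a0
  have hL0nn : 0 ≤ L0 := logexp_nonneg a0
  set εR : ℝ := (ε : ℝ) with hεRdef
  have hεR0 : 0 < εR := hε
  have hnR : (0:ℝ) < n := by exact_mod_cast hn
  obtain ⟨m0, hm0⟩ := exists_nat_ge ((L0 - a0) / (εR * n))
  set m : ℕ := m0 + 1 with hmdef
  have hmpos : 0 < m := Nat.succ_pos m0
  have hmR : (0:ℝ) < m := by exact_mod_cast hmpos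
  have hm2 : L0 - a0 ≤ εR * (n * m) := by
    have h5 : (L0 - a0) / (εR * n) ≤ (m : ℝ) := by
      rw [hmdef]
      push_cast
      linarith
    have h6 : 0 < εR * n := by positivity
    calc L0 - a0 = (L0 - a0) / (εR * n) * (εR * n) := by field_simp
      _ ≤ (m : ℝ) * (εR * n) := mul_le_mul_of_nonneg_right h5 h6.le
      _ = εR * (n * m) := by ring
  set M : ℝ := n * m * δ with hMdef
  have hM0 : 0 < M := by positivity
  set w : Fin d → ℝ := fun k => (- Y i0) * v k with hwdef
  set xstar : Fin d → ℝ := fun k => X i0 k + M * w k with hxsdef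
  set zs : (Fin d → ℝ) × ℝ := (xstar, Y i0) with hzsdef
  set z0 : (Fin d → ℝ) × ℝ := (X i0, Y i0) with hz0def
  set θ : ℝ≥0∞ := (m : ℝ≥0∞)⁻¹ with hθdef
  have hθ1 : θ ≤ 1 := by
    rw [hθdef]
    rw [ENNReal.inv_le_one]
    exact_mod_cast hmpos
  have hθsum : (1 - θ) + θ = 1 := tsub_add_cancel_of_le hθ1
  set μ0 : Measure ((Fin d → ℝ) × ℝ) :=
    (1 - θ) • Measure.dirac z0 + θ • Measure.dirac zs with hμ0def
  set P : Measure ((Fin d → ℝ) × ℝ) :=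
    (n : ℝ≥0∞)⁻¹ • ∑ i : Fin n, (if i = i0 then μ0 else Measure.dirac (X i, Y i)) with hPdef
  set π : Measure (((Fin d → ℝ) × ℝ) × ((Fin d → ℝ) × ℝ)) :=
    (n : ℝ≥0∞)⁻¹ • ∑ i : Fin n, (if i = i0 then
      ((1 - θ) • Measure.dirac (z0, z0) + θ • Measure.dirac (zs, z0))
      else Measure.dirac ((X i, Y i), (X i, Y i))) with hπdef
  have hmapsum : ∀ (f : ((Fin d → ℝ) × ℝ) × ((Fin d → ℝ) × ℝ) → (Fin d → ℝ) × ℝ)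
      (hf : Measurable f) (μ : Fin n → Measure (((Fin d → ℝ) × ℝ) × ((Fin d → ℝ) × ℝ))),
      (∑ i : Fin n, μ i).map f = ∑ i : Fin n, (μ i).map f := by
    intro f hf μ
    induction (Finset.univ : Finset (Fin n)) using Finset.induction_on with
    | empty => simp [Measure.map_zero]
    | insert a s hnotmem ih =>
        rw [Finset.sum_insert hnotmem, Finset.sum_insert hnotmem, Measure.map_add _ _ hf, ih]
  have hfst : π.map Prod.fst = P := by
    rw [hπdef, hPdef, Measure.map_smul, hmapsum _ measurable_fst]
    congr 1
    apply Finset.sum_congr rfl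
    intro i _
    split_ifs with hii
    · rw [Measure.map_add _ _ measurable_fst, Measure.map_smul, Measure.map_smul,
        Measure.map_dirac' measurable_fst, Measure.map_dirac' measurable_fst]
    · rw [Measure.map_dirac' measurable_fst]
  have hsnd : π.map Prod.snd = Pn := by
    rw [hπdef, hPndef, Measure.map_smul, hmapsum _ measurable_snd]
    congr 1
    apply Finset.sum_congr rfl
    intro i _
    split_ifs with hii
    · rw [Measure.map_add _ _ measurable_snd, Measure.map_smul, Measure.map_smul,
        Measure.map_dirac' measurable_snd, Measure.map_dirac' measurable_snd]
      show (1 - θ) • Measure.dirac z0 + θ • Measure.dirac z0 = Measure.dirac (X i, Y i)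
      rw [← add_smul, hθsum, one_smul, hii, hz0def]
    · rw [Measure.map_dirac' measurable_snd]
  have hprob : IsProbabilityMeasure P := by
    constructor
    rw [hPdef, Measure.smul_apply, Measure.coe_finset_sum, Finset.sum_apply]
    have huniv : ∀ i : Fin n,
        (if i = i0 then μ0 else Measure.dirac (X i, Y i)) Set.univ = 1 := by
      intro i
      split_ifs
      · rw [hμ0def]
        simp only [Measure.coe_add, Measure.coe_smul, Pi.add_apply, Pi.smul_apply,
          smul_eq_mul, measure_univ, mul_one]
        exact hθsum
      · exact measure_univ
    rw [Finset.sum_congr rfl fun i _ => huniv i, Finset.sum_const, Finset.card_univ,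
      Fintype.card_fin, nsmul_eq_mul, mul_one, smul_eq_mul]
    exact ENNReal.inv_mul_cancel (by exact_mod_cast hn.ne') (ENNReal.natCast_ne_top n)
  have hNw : N w ≤ 1 := by
    have hYabs : |(- Y i0)| = 1 := by rcases hY i0 with h | h <;> simp [h]
    have : N w = |(- Y i0)| * N v := by
      rw [hwdef, hNdef]
      exact gnorm_smul hPQ.symm.one_le hST.symm.one_le
        (fun i => (inv_pos.mpr (hα i)).le) (- Y i0) v
    rw [this, hYabs, one_mul]
    exact hv1
  have hNxs : N (xstar - X i0) ≤ M := by
    have hveq : xstar - X i0 = fun k => M * w k := by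
      funext k
      rw [hxsdef]
      simp [Pi.sub_apply]
    rw [hveq]
    have : N (fun k => M * w k) = |M| * N w := by
      rw [hNdef]
      exact gnorm_smul hPQ.symm.one_le hST.symm.one_le
        (fun i => (inv_pos.mpr (hα i)).le) M w
    rw [this, abs_of_pos hM0]
    calc M * N w ≤ M * 1 := mul_le_mul_of_nonneg_left hNw hM0.le
      _ = M := mul_one M
  have hDcP : Dc cost P Pn ≤ ENNReal.ofReal δ := by
    have hle1 : Dc cost P Pn ≤ ∫⁻ z, cost z.1 z.2 ∂π := by
      calc Dc cost P Pn
          ≤ ⨅ (_ : π.map Prod.fst = P) (_ : π.map Prod.snd = Pn),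
              ∫⁻ z, cost z.1 z.2 ∂π := iInf_le _ π
        _ ≤ ⨅ (_ : π.map Prod.snd = Pn), ∫⁻ z, cost z.1 z.2 ∂π := iInf_le _ hfst
        _ ≤ ∫⁻ z, cost z.1 z.2 ∂π := iInf_le _ hsnd
    have hc00 : ∀ zz : (Fin d → ℝ) × ℝ, cost zz zz = 0 := by
      intro zz
      rw [hcostdef]
      simp only [if_pos rfl]
      rw [sub_self, hNdef, gnorm_zero hPQ.symm.one_le hST.symm.one_le]
      simp
    have hcs0 : cost zs z0 = ENNReal.ofReal (N (xstar - X i0)) := by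
      rw [hcostdef]
      simp only [hzsdef, hz0def, if_pos rfl]
      simp
    have hint : ∫⁻ z, cost z.1 z.2 ∂π
        = (n : ℝ≥0∞)⁻¹ * (θ * ENNReal.ofReal (N (xstar - X i0))) := by
      rw [hπdef, lintegral_smul_measure, lintegral_finset_sum_measure]
      congr 1
      have hterm : ∀ i : Fin n, (∫⁻ z, cost z.1 z.2
          ∂(if i = i0 then ((1 - θ) • Measure.dirac (z0, z0) + θ • Measure.dirac (zs, z0))
            else Measure.dirac ((X i, Y i), (X i, Y i))))
          = if i = i0 then θ * ENNReal.ofReal (N (xstar - X i0)) else 0 := by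
        intro i
        split_ifs
        · rw [lintegral_add_measure, lintegral_smul_measure, lintegral_smul_measure,
            lintegral_dirac, lintegral_dirac]
          show (1 - θ) * cost z0 z0 + θ * cost zs z0 = _
          rw [hc00 z0, hcs0, mul_zero, zero_add]
        · rw [lintegral_dirac]
          exact hc00 _
      rw [Finset.sum_congr rfl fun i _ => hterm i, Finset.sum_ite_eq' Finset.univ i0]
      simp
    calc Dc cost P Pn ≤ (n : ℝ≥0∞)⁻¹ * (θ * ENNReal.ofReal (N (xstar - X i0))) :=
          hint ▸ hle1
      _ ≤ (n : ℝ≥0∞)⁻¹ * (θ * ENNReal.ofReal M) := by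
          gcongr <;> exact ENNReal.ofReal_le_ofReal hNxs
      _ = ENNReal.ofReal δ := by
          rw [hMdef, hθdef]
          have hcast : ENNReal.ofReal ((n : ℝ) * (m : ℝ) * δ)
              = (n : ℝ≥0∞) * (m : ℝ≥0∞) * ENNReal.ofReal δ := by
            rw [ENNReal.ofReal_mul (by positivity), ENNReal.ofReal_mul (by positivity)]
            norm_cast
          rw [hcast]
          have hn0 : (n : ℝ≥0∞) ≠ 0 := by exact_mod_cast hn.ne'
          have hm0' : (m : ℝ≥0∞) ≠ 0 := by exact_mod_cast hmpos.ne'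
          calc (n : ℝ≥0∞)⁻¹ * ((m : ℝ≥0∞)⁻¹ * ((n : ℝ≥0∞) * (m : ℝ≥0∞) * ENNReal.ofReal δ))
              = ((n : ℝ≥0∞)⁻¹ * (n : ℝ≥0∞)) * ((m : ℝ≥0∞)⁻¹ * (m : ℝ≥0∞)) * ENNReal.ofReal δ := by
                ring
            _ = ENNReal.ofReal δ := by
                rw [ENNReal.inv_mul_cancel hn0 (ENNReal.natCast_ne_top n),
                  ENNReal.inv_mul_cancel hm0' (ENNReal.natCast_ne_top m), one_mul, one_mul]
  -- value of the objective at P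
  set R : ℝ≥0∞ := ∑ i ∈ Finset.univ.erase i0, ℓ (X i, Y i) with hRdef
  have hPval : ∫⁻ z, ℓ z ∂P
      = (n : ℝ≥0∞)⁻¹ * ((((1 - θ) * ℓ z0 + θ * ℓ zs)) + R) := by
    rw [hPdef, lintegral_smul_measure, lintegral_finset_sum_measure]
    congr 1
    have hterm : ∀ i : Fin n, (∫⁻ z, ℓ z
        ∂(if i = i0 then μ0 else Measure.dirac (X i, Y i)))
        = if i = i0 then ((1 - θ) * ℓ z0 + θ * ℓ zs) else ℓ (X i, Y i) := by
      intro i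
      split_ifs
      · rw [hμ0def, lintegral_add_measure, lintegral_smul_measure, lintegral_smul_measure,
          lintegral_dirac' _ hm, lintegral_dirac' _ hm]
        simp only [smul_eq_mul]
      · exact lintegral_dirac' _ hm
    rw [Finset.sum_congr rfl fun i _ => hterm i,
      ← Finset.add_sum_erase Finset.univ _ (Finset.mem_univ i0), if_pos rfl, hRdef]
    congr 1
    apply Finset.sum_congr rfl
    intro i hi
    rw [if_neg (Finset.ne_of_mem_erase hi)]
  have hEsplit : E = (n : ℝ≥0∞)⁻¹ * (ℓ z0 + R) := by
    rw [hEeq, ← Finset.add_sum_erase Finset.univ _ (Finset.mem_univ i0), hRdef, hz0def]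
  have hkey1 : ∫⁻ z, ℓ z ∂P + (n : ℝ≥0∞)⁻¹ * (θ * ℓ z0)
      = E + (n : ℝ≥0∞)⁻¹ * (θ * ℓ zs) := by
    rw [hPval, hEsplit]
    have hθc : (1 - θ) * ℓ z0 + θ * ℓ z0 = ℓ z0 := by
      rw [← add_mul, hθsum, one_mul]
    calc (n : ℝ≥0∞)⁻¹ * (((1 - θ) * ℓ z0 + θ * ℓ zs) + R) + (n : ℝ≥0∞)⁻¹ * (θ * ℓ z0)
        = (n : ℝ≥0∞)⁻¹ * ((((1 - θ) * ℓ z0 + θ * ℓ z0) + θ * ℓ zs) + R) := by ring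
      _ = (n : ℝ≥0∞)⁻¹ * ((ℓ z0 + θ * ℓ zs) + R) := by rw [hθc]
      _ = (n : ℝ≥0∞)⁻¹ * (ℓ z0 + R) + (n : ℝ≥0∞)⁻¹ * (θ * ℓ zs) := by ring
  -- the loss at the perturbed point
  have hY2 : Y i0 * Y i0 = 1 := by rcases hY i0 with h | h <;> rw [h] <;> norm_num
  have harg : - Y i0 * (∑ k, β k * xstar k) = a0 + M * K := by
    have hsum : ∑ k, β k * xstar k = (∑ k, β k * X i0 k) + M * (- Y i0) * K := by
      rw [hxsdef]
      have hre : ∀ k, β k * (X i0 k + M * ((- Y i0) * v k))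
          = β k * X i0 k + (M * (- Y i0)) * (β k * v k) := fun k => by ring
      rw [Finset.sum_congr rfl fun k _ => hre k, Finset.sum_add_distrib, ← Finset.mul_sum, hv2]
    rw [hsum]
    calc - Y i0 * ((∑ k, β k * X i0 k) + M * (- Y i0) * K)
        = - Y i0 * (∑ k, β k * X i0 k) + (Y i0 * Y i0) * (M * K) := by ring
      _ = a0 + M * K := by rw [hY2, ha0def, one_mul]
  have hLzs : L zs = Real.log (1 + Real.exp (a0 + M * K)) := by
    show Real.log (1 + Real.exp (- Y i0 * ∑ k, β k * xstar k))
        = Real.log (1 + Real.exp (a0 + M * K))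
    rw [harg]
  -- final assembly
  set cE : ℝ≥0∞ := (n : ℝ≥0∞)⁻¹ * θ with hcEdef
  set c : ℝ := ((n : ℝ) * m)⁻¹ with hcdef
  have hc0 : 0 ≤ c := by rw [hcdef]; positivity
  have hn0' : (n : ℝ≥0∞) ≠ 0 := by exact_mod_cast hn.ne'
  have hcE : cE = ENNReal.ofReal c := by
    rw [hcEdef, hcdef, hθdef]
    have h1 : ENNReal.ofReal ((n:ℝ) * m) = (n : ℝ≥0∞) * m := by
      rw [ENNReal.ofReal_mul (by positivity)]
      norm_cast
    rw [ENNReal.ofReal_inv_of_pos (by positivity), h1,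
      ENNReal.mul_inv (Or.inl hn0') (Or.inl (ENNReal.natCast_ne_top n))]
  have hl0 : ℓ z0 = ENNReal.ofReal L0 := rfl
  have hLzs_ge : ENNReal.ofReal (a0 + M * K) ≤ ℓ zs := by
    have : ℓ zs = ENNReal.ofReal (L zs) := rfl
    rw [this, hLzs]
    exact ENNReal.ofReal_le_ofReal (le_logexp (a0 + M * K))
  have hcM : c * M = δ := by
    rw [hcdef, hMdef]
    have hre : ((n:ℝ) * m)⁻¹ * ((n:ℝ) * (m:ℝ) * δ) = (((n:ℝ) * m)⁻¹ * ((n:ℝ) * m)) * δ := by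
      ring
    rw [hre, inv_mul_cancel₀ (mul_pos hnR hmR).ne', one_mul]
  have hreal : δ * K + c * L0 ≤ c * (a0 + M * K) + εR := by
    have hc1 : c * ((n:ℝ) * m) = 1 := by
      rw [hcdef]
      exact inv_mul_cancel₀ (mul_pos hnR hmR).ne' 
    have h7 : c * (L0 - a0) ≤ εR := by
      have h7a : c * (L0 - a0) ≤ c * (εR * ((n:ℝ) * m)) :=
        mul_le_mul_of_nonneg_left hm2 hc0
      have h7b : c * (εR * ((n:ℝ) * m)) = εR * (c * ((n:ℝ) * m)) := by ring
      rw [h7b, hc1, mul_one] at h7a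
      exact h7a
    have h8 : c * (M * K) = δ * K := by rw [← mul_assoc, hcM]
    have h9 : c * (a0 + M * K) = c * a0 + δ * K := by rw [mul_add, h8]
    have h10 : c * L0 - c * a0 = c * (L0 - a0) := by ring
    linarith
  have hkey2 : ENNReal.ofReal (δ * K) + cE * ℓ z0 ≤ cE * ℓ zs + (ε : ℝ≥0∞) := by
    calc ENNReal.ofReal (δ * K) + cE * ℓ z0
        = ENNReal.ofReal (δ * K) + ENNReal.ofReal (c * L0) := by
          rw [hl0, hcE, ← ENNReal.ofReal_mul hc0]
      _ = ENNReal.ofReal (δ * K + c * L0) := by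
          rw [← ENNReal.ofReal_add (mul_nonneg hδ.le hK0) (mul_nonneg hc0 hL0nn)]
      _ ≤ ENNReal.ofReal (c * (a0 + M * K) + εR) := ENNReal.ofReal_le_ofReal hreal
      _ ≤ ENNReal.ofReal (c * (a0 + M * K)) + ENNReal.ofReal εR := ENNReal.ofReal_add_le
      _ ≤ cE * ℓ zs + (ε : ℝ≥0∞) := by
          apply add_le_add
          · rw [ENNReal.ofReal_mul hc0, ← hcE]
            exact mul_le_mul_right hLzs_ge cE
          · rw [hεRdef]
            exact le_of_eq ENNReal.ofReal_coe_nnreal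
  have hlne : cE * ℓ z0 ≠ ⊤ := by
    rw [hcE, hl0]
    exact ENNReal.mul_ne_top ENNReal.ofReal_ne_top ENNReal.ofReal_ne_top
  have hassoc : ∀ x : ℝ≥0∞, cE * x = (n : ℝ≥0∞)⁻¹ * (θ * x) := fun x => by
    rw [hcEdef, mul_assoc]
  have hfinal : E + ENNReal.ofReal (δ * K) ≤ ∫⁻ z, ℓ z ∂P + (ε : ℝ≥0∞) := by
    rw [← ENNReal.add_le_add_iff_right hlne]
    calc E + ENNReal.ofReal (δ * K) + cE * ℓ z0
        = E + (ENNReal.ofReal (δ * K) + cE * ℓ z0) := by ring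
      _ ≤ E + (cE * ℓ zs + (ε : ℝ≥0∞)) := add_le_add_right hkey2 _
      _ = (E + cE * ℓ zs) + (ε : ℝ≥0∞) := by ring
      _ = (∫⁻ z, ℓ z ∂P + cE * ℓ z0) + (ε : ℝ≥0∞) := by
          rw [hassoc, hassoc, ← hkey1]
      _ = ∫⁻ z, ℓ z ∂P + (ε : ℝ≥0∞) + cE * ℓ z0 := by ring
  have hPle : ∫⁻ z, ℓ z ∂P ≤ ⨆ (P' : Measure ((Fin d → ℝ) × ℝ)) (_ : IsProbabilityMeasure P')
      (_ : Dc cost P' Pn ≤ ENNReal.ofReal δ), ∫⁻ z, ℓ z ∂P' := by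
    have s1 : ∫⁻ z, ℓ z ∂P ≤ ⨆ (_ : Dc cost P Pn ≤ ENNReal.ofReal δ), ∫⁻ z, ℓ z ∂P :=
      le_iSup (fun _ => ∫⁻ z, ℓ z ∂P) hDcP
    have s2 : (⨆ (_ : Dc cost P Pn ≤ ENNReal.ofReal δ), ∫⁻ z, ℓ z ∂P)
        ≤ ⨆ (_ : IsProbabilityMeasure P) (_ : Dc cost P Pn ≤ ENNReal.ofReal δ),
            ∫⁻ z, ℓ z ∂P :=
      le_iSup (fun _ : IsProbabilityMeasure P =>
        ⨆ (_ : Dc cost P Pn ≤ ENNReal.ofReal δ), ∫⁻ z, ℓ z ∂P) hprob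
    have s3 : (⨆ (_ : IsProbabilityMeasure P) (_ : Dc cost P Pn ≤ ENNReal.ofReal δ),
          ∫⁻ z, ℓ z ∂P)
        ≤ ⨆ (P' : Measure ((Fin d → ℝ) × ℝ)) (_ : IsProbabilityMeasure P')
            (_ : Dc cost P' Pn ≤ ENNReal.ofReal δ), ∫⁻ z, ℓ z ∂P' :=
      le_iSup (fun P' : Measure ((Fin d → ℝ) × ℝ) =>
        ⨆ (_ : IsProbabilityMeasure P') (_ : Dc cost P' Pn ≤ ENNReal.ofReal δ),
          ∫⁻ z, ℓ z ∂P') P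
    exact s1.trans (s2.trans s3)
  exact le_trans hfinal (add_le_add_left hPle _)
end key

theorem statement9 {d dbar : ℕ} (hd : 1 ≤ d) {n : ℕ} (hn : 0 < n)
    (G : Fin dbar → Finset (Fin d)) (hG : IsPartition G)
    (α : Fin dbar → ℝ) (hα : ∀ i, 0 < α i)
    (p q s t : ℝ≥0∞) (hp : 1 ≤ p) (hq : 1 ≤ q) (hs : 1 ≤ s) (ht : 1 ≤ t)
    (hpq : 1 / p + 1 / q = 1) (hst : 1 / s + 1 / t = 1)
    (X : Fin n → Fin d → ℝ) (Y : Fin n → ℝ) (hY : ∀ i, Y i = 1 ∨ Y i = -1)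
    (δ : ℝ) (hδ : 0 < δ) :
    (⨅ β : Fin d → ℝ,
        ⨆ (P : Measure ((Fin d → ℝ) × ℝ)) (_ : IsProbabilityMeasure P)
          (_ : Dc
              (fun u w => if u.2 = w.2 then
                ENNReal.ofReal (gnorm G (fun i => (α i)⁻¹) q t (u.1 - w.1)) else ⊤)
              P ((n : ℝ≥0∞)⁻¹ • ∑ i : Fin n, Measure.dirac (X i, Y i)) ≤ ENNReal.ofReal δ),
          ∫⁻ z, ENNReal.ofReal (Real.log (1 + Real.exp (- z.2 * ∑ k, β k * z.1 k))) ∂P)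
      = ⨅ β : Fin d → ℝ,
          ((∫⁻ z, ENNReal.ofReal (Real.log (1 + Real.exp (- z.2 * ∑ k, β k * z.1 k)))
                ∂((n : ℝ≥0∞)⁻¹ • ∑ i : Fin n, Measure.dirac (X i, Y i)))
            + ENNReal.ofReal (δ * gnorm G α p s β)) := by
  have hPQ : ENNReal.IsConjExponent p q := ⟨by simpa [one_div] using hpq⟩
  have hST : ENNReal.IsConjExponent s t := ⟨by simpa [one_div] using hst⟩
  exact iInf_congr fun β => key hn G hG α hα p q s t hPQ hST X Y hY δ hδ β
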